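/- For any three vectors x, y, z in ℝ^n equipped with the ℓ1-norm, the radius of the smallest ℓ1-ball containing {x, y, z} equals half the diameter of {x, y, z}, i.e., inf over w in ℝ^n of max(‖x−w‖₁, ‖y−w‖₁, ‖z−w‖₁) = (1/2)·max(‖x−y‖₁, ‖y−z‖₁, ‖x−z‖₁). -/

import Mathlib

-- pointwise median lemma
lemma med_abs (a b c : ℝ) (h1 : min a b ≤ c) (h2 : c ≤ max a b) :
    |a - c| + |b - c| = |a - b| := by
  rcases le_total a b with h | h
  · rw [min_eq_left h] at h1; rw [max_eq_right h] at h2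
    rw [abs_of_nonpos (by linarith), abs_of_nonneg (by linarith),
      abs_of_nonpos (by linarith)]; ring
  · rw [min_eq_right h] at h1; rw [max_eq_left h] at h2
    rw [abs_of_nonneg (by linarith), abs_of_nonpos (by linarith),
      abs_of_nonneg (by linarith)]; ring

lemma med_props (a b c : ℝ) :
    (|a - max (min a b) (min c (max a b))| + |b - max (min a b) (min c (max a b))| = |a - b|) ∧
    (|b - max (min a b) (min c (max a b))| + |c - max (min a b) (min c (max a b))| = |b - c|) ∧
    (|a - max (min a b) (min c (max a b))| + |c - max (min a b) (min c (max a b))| = |a - c|) := by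
  refine ⟨med_abs _ _ _ ?_ ?_, med_abs _ _ _ ?_ ?_, med_abs _ _ _ ?_ ?_⟩ <;>
    rcases le_total a b with h1 | h1 <;> rcases le_total b c with h2 | h2 <;>
      rcases le_total a c with h3 | h3 <;>
      simp_all [min_def, max_def] <;> first | linarith | (split_ifs <;> linarith)

lemma exists_center (n : ℕ) (x y z m : Fin n → ℝ)
    (hb : (∑ j, |y j - m j|) ≤ ∑ j, |x j - m j|)
    (hc : (∑ j, |z j - m j|) ≤ ∑ j, |x j - m j|) :
    ∃ w : Fin n → ℝ,
      (∑ j, |x j - w j|) ≤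
        ((∑ j, |x j - m j|) + max (∑ j, |y j - m j|) (∑ j, |z j - m j|)) / 2 ∧
      (∑ j, |y j - w j|) ≤
        ((∑ j, |x j - m j|) + max (∑ j, |y j - m j|) (∑ j, |z j - m j|)) / 2 ∧
      (∑ j, |z j - w j|) ≤
        ((∑ j, |x j - m j|) + max (∑ j, |y j - m j|) (∑ j, |z j - m j|)) / 2 := by
  set a := ∑ j, |x j - m j| with ha_def
  set b := ∑ j, |y j - m j| with hb_def
  set c := ∑ j, |z j - m j| with hc_def
  have ha0 : 0 ≤ a := Finset.sum_nonneg fun j _ => abs_nonneg _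
  have hb0 : 0 ≤ b := Finset.sum_nonneg fun j _ => abs_nonneg _
  have hc0 : 0 ≤ c := Finset.sum_nonneg fun j _ => abs_nonneg _
  rcases eq_or_lt_of_le ha0 with haz | hap
  · refine ⟨m, ?_, ?_, ?_⟩ <;> simp only [← ha_def, ← hb_def, ← hc_def]
    · have : max b c ≥ 0 := le_trans hb0 (le_max_left _ _); linarith
    · have : b ≤ max b c := le_max_left _ _; linarith
    · have : c ≤ max b c := le_max_right _ _; linarith
  · set θ : ℝ := (a - max b c) / (2 * a) with hθ_def
    have hmax0 : 0 ≤ max b c := le_trans hb0 (le_max_left _ _)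
    have hmaxa : max b c ≤ a := max_le hb hc
    have hθ0 : 0 ≤ θ := by
      apply div_nonneg (by linarith) (by linarith)
    have hθ1 : θ ≤ 1 := by
      rw [div_le_one (by linarith)]; linarith
    have hθa : θ * a = (a - max b c) / 2 := by
      rw [hθ_def, div_mul_eq_mul_div, mul_comm (2:ℝ) a, ← div_div, mul_div_cancel_right₀ _ hap.ne']
    refine ⟨fun j => m j + θ * (x j - m j), ?_, ?_, ?_⟩
    · have heq : ∀ j, |x j - (m j + θ * (x j - m j))| = (1 - θ) * |x j - m j| := by
        intro j
        have : x j - (m j + θ * (x j - m j)) = (1 - θ) * (x j - m j) := by ring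
        rw [this, abs_mul, abs_of_nonneg (by linarith)]
      calc (∑ j, |x j - (fun j => m j + θ * (x j - m j)) j|)
          = ∑ j, (1 - θ) * |x j - m j| := Finset.sum_congr rfl fun j _ => heq j
        _ = (1 - θ) * a := by rw [← Finset.mul_sum]
        _ ≤ (a + max b c) / 2 := by nlinarith [hθa]
    · calc (∑ j, |y j - (fun j => m j + θ * (x j - m j)) j|)
          ≤ ∑ j, (|y j - m j| + θ * |x j - m j|) := by
            apply Finset.sum_le_sum; intro j _
            have h1 : y j - (m j + θ * (x j - m j)) = (y j - m j) - θ * (x j - m j) := by ring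
            rw [h1]
            calc |(y j - m j) - θ * (x j - m j)| ≤ |y j - m j| + |θ * (x j - m j)| :=
                  abs_sub _ _
              _ = |y j - m j| + θ * |x j - m j| := by
                  rw [abs_mul, abs_of_nonneg hθ0]
        _ = b + θ * a := by rw [Finset.sum_add_distrib, ← Finset.mul_sum]
        _ ≤ (a + max b c) / 2 := by
            have : b ≤ max b c := le_max_left _ _
            rw [hθa]; linarith
    · calc (∑ j, |z j - (fun j => m j + θ * (x j - m j)) j|)
          ≤ ∑ j, (|z j - m j| + θ * |x j - m j|) := by
            apply Finset.sum_le_sum; intro j _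
            have h1 : z j - (m j + θ * (x j - m j)) = (z j - m j) - θ * (x j - m j) := by ring
            rw [h1]
            calc |(z j - m j) - θ * (x j - m j)| ≤ |z j - m j| + |θ * (x j - m j)| :=
                  abs_sub _ _
              _ = |z j - m j| + θ * |x j - m j| := by
                  rw [abs_mul, abs_of_nonneg hθ0]
        _ = c + θ * a := by rw [Finset.sum_add_distrib, ← Finset.mul_sum]
        _ ≤ (a + max b c) / 2 := by
            have : c ≤ max b c := le_max_right _ _
            rw [hθa]; linarith

/-- For any three vectors `x, y, z` in `ℝ^n` with the ℓ1-norm, the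
Chebyshev radius of `{x,y,z}` equals half its diameter. -/
theorem stmt_0 (n : ℕ) (x y z : Fin n → ℝ) :
    (⨅ w : Fin n → ℝ,
        max (max (∑ j, |x j - w j|) (∑ j, |y j - w j|)) (∑ j, |z j - w j|))
      = (1 / 2) *
        max (max (∑ j, |x j - y j|) (∑ j, |y j - z j|)) (∑ j, |x j - z j|) := by
  set m : Fin n → ℝ := fun j => max (min (x j) (y j)) (min (z j) (max (x j) (y j))) with hm
  set a := ∑ j, |x j - m j| with ha_def
  set b := ∑ j, |y j - m j| with hb_def
  set c := ∑ j, |z j - m j| with hc_def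
  have hxy : a + b = ∑ j, |x j - y j| := by
    rw [ha_def, hb_def, ← Finset.sum_add_distrib]
    exact Finset.sum_congr rfl fun j _ => (med_props (x j) (y j) (z j)).1
  have hyz : b + c = ∑ j, |y j - z j| := by
    rw [hb_def, hc_def, ← Finset.sum_add_distrib]
    exact Finset.sum_congr rfl fun j _ => (med_props (x j) (y j) (z j)).2.1
  have hxz : a + c = ∑ j, |x j - z j| := by
    rw [ha_def, hc_def, ← Finset.sum_add_distrib]
    exact Finset.sum_congr rfl fun j _ => (med_props (x j) (y j) (z j)).2.2
  set M := max (max (∑ j, |x j - y j|) (∑ j, |y j - z j|)) (∑ j, |x j - z j|) with hM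
  have u1 : a + b ≤ M := hxy ▸ le_max_of_le_left (le_max_left _ _)
  have u2 : b + c ≤ M := hyz ▸ le_max_of_le_left (le_max_right _ _)
  have u3 : a + c ≤ M := hxz ▸ le_max_right _ _
  have hbdd : BddBelow (Set.range fun w : Fin n → ℝ =>
      max (max (∑ j, |x j - w j|) (∑ j, |y j - w j|)) (∑ j, |z j - w j|)) := by
    refine ⟨0, ?_⟩
    rintro r ⟨w, rfl⟩
    exact le_max_of_le_right (Finset.sum_nonneg fun j _ => abs_nonneg _)
  apply le_antisymm
  · -- upper bound: find a good center
    have key : ∃ w : Fin n → ℝ,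
        max (max (∑ j, |x j - w j|) (∑ j, |y j - w j|)) (∑ j, |z j - w j|)
          ≤ (1 / 2) * M := by
      rcases le_total b a with h1 | h1
      · rcases le_total c a with h2 | h2
        · -- a max
            obtain ⟨w, w1, w2, w3⟩ := exists_center n x y z m
              (by simp only [← ha_def, ← hb_def, ← hc_def]; linarith)
              (by simp only [← ha_def, ← hb_def, ← hc_def]; linarith)
            refine ⟨w, ?_⟩
            have hK : (a + max b c) / 2 ≤ (1 / 2) * M := by
              rcases max_cases b c with ⟨he, _⟩ | ⟨he, _⟩ <;> rw [he] <;> linarith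
            simp only [← ha_def, ← hb_def, ← hc_def] at w1 w2 w3
            exact max_le (max_le (w1.trans hK) (w2.trans hK)) (w3.trans hK)
        · -- c max
            obtain ⟨w, w1, w2, w3⟩ := exists_center n z x y m
              (by simp only [← ha_def, ← hb_def, ← hc_def]; linarith)
              (by simp only [← ha_def, ← hb_def, ← hc_def]; linarith)
            refine ⟨w, ?_⟩
            have hK : (c + max a b) / 2 ≤ (1 / 2) * M := by
              rcases max_cases a b with ⟨he, _⟩ | ⟨he, _⟩ <;> rw [he] <;> linarith
            simp only [← ha_def, ← hb_def, ← hc_def] at w1 w2 w3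
            exact max_le (max_le (w2.trans hK) (w3.trans hK)) (w1.trans hK)
      · rcases le_total c b with h3 | h3
        · -- b max
            obtain ⟨w, w1, w2, w3⟩ := exists_center n y x z m
              (by simp only [← ha_def, ← hb_def, ← hc_def]; linarith)
              (by simp only [← ha_def, ← hb_def, ← hc_def]; linarith)
            refine ⟨w, ?_⟩
            have hK : (b + max a c) / 2 ≤ (1 / 2) * M := by
              rcases max_cases a c with ⟨he, _⟩ | ⟨he, _⟩ <;> rw [he] <;> linarith
            simp only [← ha_def, ← hb_def, ← hc_def] at w1 w2 w3
            exact max_le (max_le (w2.trans hK) (w1.trans hK)) (w3.trans hK)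
        · -- c max
            obtain ⟨w, w1, w2, w3⟩ := exists_center n z x y m
              (by simp only [← ha_def, ← hb_def, ← hc_def]; linarith)
              (by simp only [← ha_def, ← hb_def, ← hc_def]; linarith)
            refine ⟨w, ?_⟩
            have hK : (c + max a b) / 2 ≤ (1 / 2) * M := by
              rcases max_cases a b with ⟨he, _⟩ | ⟨he, _⟩ <;> rw [he] <;> linarith
            simp only [← ha_def, ← hb_def, ← hc_def] at w1 w2 w3
            exact max_le (max_le (w2.trans hK) (w3.trans hK)) (w1.trans hK)
    obtain ⟨w, hw⟩ := key
    exact (ciInf_le hbdd w).trans hw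
  · -- lower bound
    apply le_ciInf
    intro w
    have t1 : (∑ j, |x j - y j|) ≤ (∑ j, |x j - w j|) + ∑ j, |y j - w j| := by
      rw [← Finset.sum_add_distrib]
      refine Finset.sum_le_sum fun j _ => ?_
      have := abs_sub_le (x j) (w j) (y j)
      rwa [abs_sub_comm (w j) (y j)] at this
    have t2 : (∑ j, |y j - z j|) ≤ (∑ j, |y j - w j|) + ∑ j, |z j - w j| := by
      rw [← Finset.sum_add_distrib]
      refine Finset.sum_le_sum fun j _ => ?_
      have := abs_sub_le (y j) (w j) (z j)
      rwa [abs_sub_comm (w j) (z j)] at this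
    have t3 : (∑ j, |x j - z j|) ≤ (∑ j, |x j - w j|) + ∑ j, |z j - w j| := by
      rw [← Finset.sum_add_distrib]
      refine Finset.sum_le_sum fun j _ => ?_
      have := abs_sub_le (x j) (w j) (z j)
      rwa [abs_sub_comm (w j) (z j)] at this
    set P := ∑ j, |x j - w j|
    set Q := ∑ j, |y j - w j|
    set R := ∑ j, |z j - w j|
    have hP : P ≤ max (max P Q) R := le_max_of_le_left (le_max_left _ _)
    have hQ : Q ≤ max (max P Q) R := le_max_of_le_left (le_max_right _ _)
    have hR : R ≤ max (max P Q) R := le_max_right _ _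
    have : M ≤ 2 * max (max P Q) R := by
      refine max_le (max_le ?_ ?_) ?_ <;> linarith
    linarith
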